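/- Let n ≥ 1 be an integer, t > 0 and λ a nonzero real number. For every pair of multi-indices α, β ∈ ℕ₀^n there exists f ∈ L²(ℝ^{2n}) such that H_t^λ f(z,w) = z^α w^β exp(-(λ/4)·coth(2tλ)·(z·z + w·w)) for all (z,w) ∈ ℂ^{2n}; that is, every such polynomial times the Gaussian factor lies in the image of the λ-twisted heat kernel transform. -/

import Mathlib

open MeasureTheory Complex Filter Topology

noncomputable section

/-- Real hyperbolic cotangent. -/
def cothR (x : ℝ) : ℝ := Real.cosh x / Real.sinh x

/-- Bilinear dot product on `ℂ^n`: `z · w = ∑ j, z j * w j`. -/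
def dotC {n : ℕ} (z w : Fin n → ℂ) : ℂ := ∑ j, z j * w j

/-- Embedding `ℝ^n → ℂ^n`. -/
def embC {n : ℕ} (x : Fin n → ℝ) : Fin n → ℂ := fun j => (x j : ℂ)

/-- The twisted heat kernel `p_t^λ` on `ℂ^{2n}`. -/
def pC (n : ℕ) (t lam : ℝ) (z w : Fin n → ℂ) : ℂ :=
  (((4 * Real.pi) ^ n)⁻¹ : ℝ) * (((lam / Real.sinh (t * lam)) ^ n : ℝ) : ℂ) *
    Complex.exp (((-(lam / 4) * cothR (t * lam) : ℝ) : ℂ) * (dotC z z + dotC w w))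

/-- The λ-twisted heat kernel transform. -/
def HT (n : ℕ) (t lam : ℝ) (f : (Fin n → ℝ) × (Fin n → ℝ) → ℂ) (z w : Fin n → ℂ) : ℂ :=
  ∫ p : (Fin n → ℝ) × (Fin n → ℝ),
    f p * pC n t lam (z - embC p.1) (w - embC p.2) *
      Complex.exp (-(Complex.I * lam / 2) * (dotC (embC p.1) w - dotC (embC p.2) z))



/-- two-step induction -/
lemma twoStep {P : ℕ → Prop} (h0 : P 0) (h1 : P 1)
    (hs : ∀ k, P k → P (k+1) → P (k+2)) : ∀ k, P k := by
  have H : ∀ k, P k ∧ P (k+1) := by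
    intro k
    induction k with
    | zero => exact ⟨h0, h1⟩
    | succ m ih => exact ⟨ih.2, hs m ih.1 ih.2⟩
  exact fun k => (H k).1

def Her (c : ℝ) : ℕ → ℝ → ℂ
  | 0, _ => 1
  | 1, x => (x : ℂ)
  | (k+2), x => (x : ℂ) * Her c (k+1) x - (((k : ℕ) + 1 : ℂ)) / (4*c) * Her c k x

lemma her_rec (c : ℝ) (k : ℕ) (x : ℝ) :
    Her c (k+1) x = (x : ℂ) * Her c k x - (k : ℂ) / (4*c) * Her c (k-1) x := by
  match k with
  | 0 => simp [Her]
  | (m+1) => simp [Her]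

lemma her_hasDerivAt (c : ℝ) (k : ℕ) (x : ℝ) :
    HasDerivAt (Her c k) ((k : ℂ) * Her c (k-1) x) x := by
  induction k using twoStep generalizing x with
  | h0 => simpa [Her] using hasDerivAt_const x (1 : ℂ)
  | h1 =>
      have : HasDerivAt (fun y : ℝ => (y : ℂ)) 1 x := (hasDerivAt_id x).ofReal_comp
      simpa [Her] using this
  | hs k ih1 ih2 =>
      have hx : HasDerivAt (fun y : ℝ => (y : ℂ)) 1 x := (hasDerivAt_id x).ofReal_comp
      have h := (hx.fun_mul (ih2 x)).fun_sub ((ih1 x).const_mul (((k : ℕ) + 1 : ℂ) / (4*c)))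
      have heq : (fun y : ℝ => (y : ℂ) * Her c (k+1) y - (((k : ℕ) + 1 : ℂ)) / (4*c) * Her c k y)
          = Her c (k+2) := by
        funext y; simp [Her]
      rw [heq] at h
      convert h using 1
      · rfl
      have hr := her_rec c k x
      simp only [Nat.add_sub_cancel] at *
      push_cast
      rw [hr]
      ring

lemma her_continuous (c : ℝ) (k : ℕ) : Continuous (Her c k) :=
  continuous_iff_continuousAt.2 fun x => (her_hasDerivAt c k x).continuousAt

lemma her_bound (c : ℝ) (k : ℕ) :
    ∃ C : ℝ, 0 ≤ C ∧ ∀ x : ℝ, ‖Her c k x‖ ≤ C * (1 + |x|) ^ k := by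
  induction k using twoStep with
  | h0 => exact ⟨1, zero_le_one, fun x => by simp [Her]⟩
  | h1 => exact ⟨1, zero_le_one, fun x => by simp [Her]⟩
  | hs k ih1 ih2 =>
      obtain ⟨C1, hC1, h1⟩ := ih1
      obtain ⟨C2, hC2, h2⟩ := ih2
      set d : ℝ := ‖(((k : ℕ) + 1 : ℂ)) / (4*(c:ℂ))‖ with hd
      have hd0 : 0 ≤ d := norm_nonneg _
      refine ⟨C2 + d * C1, by positivity, fun x => ?_⟩
      have hb : (1:ℝ) ≤ 1 + |x| := by simp [abs_nonneg]
      have hb0 : (0:ℝ) ≤ 1 + |x| := by positivity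
      have e1 : ‖Her c (k+2) x‖ ≤ |x| * ‖Her c (k+1) x‖ + d * ‖Her c k x‖ := by
        simp only [Her]
        refine (norm_sub_le _ _).trans ?_
        rw [norm_mul, norm_mul, Complex.norm_real, Real.norm_eq_abs]
      have e2 : |x| * ‖Her c (k+1) x‖ ≤ C2 * (1 + |x|)^(k+2) := by
        calc |x| * ‖Her c (k+1) x‖ ≤ (1+|x|) * (C2 * (1+|x|)^(k+1)) := by
              apply mul_le_mul (by linarith [abs_nonneg x]) (h2 x) (norm_nonneg _) hb0
          _ = C2 * (1 + |x|)^(k+2) := by ring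
      have e3 : d * ‖Her c k x‖ ≤ d * C1 * (1 + |x|)^(k+2) := by
        calc d * ‖Her c k x‖ ≤ d * (C1 * (1+|x|)^k) := by
              apply mul_le_mul_of_nonneg_left (h1 x) hd0
          _ ≤ d * C1 * (1 + |x|)^(k+2) := by
              rw [mul_assoc]
              apply mul_le_mul_of_nonneg_left ?_ hd0
              apply mul_le_mul_of_nonneg_left ?_ hC1
              exact pow_le_pow_right₀ hb (by omega)
      calc ‖Her c (k+2) x‖ ≤ |x| * ‖Her c (k+1) x‖ + d * ‖Her c k x‖ := e1
        _ ≤ C2 * (1+|x|)^(k+2) + d * C1 * (1+|x|)^(k+2) := add_le_add e2 e3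
        _ = (C2 + d * C1) * (1+|x|)^(k+2) := by ring

lemma gauss_dom (a r : ℝ) (ha : 0 < a) (k : ℕ) :
    ∃ C : ℝ, 0 ≤ C ∧ ∀ x : ℝ,
      (1+|x|)^k * Real.exp (-(a*x^2) + r*x) ≤ C * Real.exp (-(a/2)*x^2) := by
  refine ⟨Real.exp ((k+|r|)^2/(2*a)), (Real.exp_pos _).le, fun x => ?_⟩
  have h1 : (1+|x|)^k ≤ Real.exp (k*|x|) := by
    calc (1+|x|)^k ≤ (Real.exp |x|)^k := by
          apply pow_le_pow_left₀ (by positivity)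
          linarith [Real.add_one_le_exp |x|]
      _ = Real.exp (k*|x|) := by rw [← Real.exp_nat_mul]
  have h2 : (1+|x|)^k * Real.exp (-(a*x^2) + r*x)
      ≤ Real.exp (k*|x| + (-(a*x^2) + r*x)) := by
    calc (1+|x|)^k * Real.exp (-(a*x^2) + r*x)
        ≤ Real.exp (k*|x|) * Real.exp (-(a*x^2) + r*x) :=
          mul_le_mul_of_nonneg_right h1 (Real.exp_pos _).le
      _ = Real.exp (k*|x| + (-(a*x^2) + r*x)) := (Real.exp_add _ _).symm
  refine h2.trans ?_
  rw [← Real.exp_add]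
  apply Real.exp_le_exp.2
  have h3 : r*x ≤ |r| * |x| := by
    calc r*x ≤ |r*x| := le_abs_self _
      _ = |r| * |x| := abs_mul r x
  have h4 : (k+|r|)*|x| ≤ (a/2)*x^2 + (k+|r|)^2/(2*a) := by
    have hs := sq_nonneg (a*|x| - (k+|r|))
    have hx2 := _root_.sq_abs x
    have h2a : (0:ℝ) < 2*a := by positivity
    have h4' : 2*a*((k+|r|)*|x|) ≤ a^2*x^2 + (k+|r|)^2 := by nlinarith [hs, hx2]
    calc (k+|r|)*|x| = (2*a*((k+|r|)*|x|))/(2*a) := by field_simp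
      _ ≤ (a^2*x^2 + (k+|r|)^2)/(2*a) := (div_le_div_iff_of_pos_right h2a).2 h4'
      _ = (a/2)*x^2 + (k+|r|)^2/(2*a) := by field_simp
  nlinarith [_root_.sq_abs x, h3, h4]

lemma integrable_aux (a r : ℝ) (ha : 0 < a) (k : ℕ) :
    Integrable (fun x : ℝ => (1+|x|)^k * Real.exp (-(a*x^2) + r*x)) := by
  obtain ⟨C, hC, hb⟩ := gauss_dom a r ha k
  apply Integrable.mono' ((integrable_exp_neg_mul_sq (by positivity : (0:ℝ) < a/2)).const_mul C)
  · apply Continuous.aestronglyMeasurable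
    fun_prop
  · filter_upwards with x
    rw [Real.norm_eq_abs, _root_.abs_of_nonneg]
    · simpa [neg_mul] using hb x
    · positivity

/-- canonical 1D Gaussian factor -/
def EE (c : ℝ) (L : ℂ) (y : ℝ) : ℂ :=
  Complex.exp (-(2*(c:ℂ)) * (y:ℂ)^2 + L*(y:ℂ))

lemma EE_cont (c : ℝ) (L : ℂ) : Continuous (EE c L) := by
  unfold EE; fun_prop

lemma EE_norm (c' : ℝ) (N : ℂ) (x : ℝ) :
    ‖EE c' N x‖ = Real.exp (-(2*c'*x^2) + N.re*x) := by
  have hre : (-(2*(c':ℂ)) * (x:ℂ)^2 + N*(x:ℂ)).re = -(2*c'*x^2) + N.re*x := by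
    simp [Complex.add_re, Complex.mul_re, ← Complex.ofReal_pow]
  rw [EE, Complex.norm_exp, hre]

lemma integrable_aux0 (a : ℝ) (ha : 0 < a) (k : ℕ) :
    Integrable (fun x : ℝ => (1+|x|)^k * Real.exp (-(a*x^2))) := by
  have := integrable_aux a 0 ha k
  simpa using this

lemma her_integrable (c : ℝ) {c' : ℝ} (hc : 0 < c') (k : ℕ) (L : ℂ) :
    Integrable fun x : ℝ => Her c k x * EE c' L x := by
  obtain ⟨C, hC, hb⟩ := her_bound c k
  apply Integrable.mono' (((integrable_aux (2*c') L.re (by positivity) k).const_mul C))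
  · exact ((her_continuous c k).mul (EE_cont c' L)).aestronglyMeasurable
  · filter_upwards with x
    rw [norm_mul]
    have hre : (-(2*(c':ℂ)) * (x:ℂ)^2 + L*(x:ℂ)).re = -(2*c'*x^2) + L.re*x := by
      simp [Complex.add_re, Complex.mul_re, ← Complex.ofReal_pow]
    have he : ‖EE c' L x‖ = Real.exp (-(2*c'*x^2) + L.re*x) := by
      rw [EE, Complex.norm_exp, hre]
    rw [he]
    calc ‖Her c k x‖ * Real.exp (-(2*c'*x^2)+L.re*x)
        ≤ (C*(1+|x|)^k) * Real.exp (-(2*c'*x^2)+L.re*x) :=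
          mul_le_mul_of_nonneg_right (hb x) (Real.exp_pos _).le
      _ = C * ((1+|x|)^k * Real.exp (-(2*c'*x^2)+L.re*x)) := by ring

lemma key (c : ℝ) (hc : 0 < c) (L : ℂ) : ∀ k : ℕ,
    ∫ x : ℝ, Her c k x * EE c L x
      = (L/(4*(c:ℂ)))^k * (((Real.pi : ℂ) / (2*(c:ℂ))) ^ ((1:ℂ)/2) * Complex.exp (L^2/(8*(c:ℂ)))) := by
  have hcC : (c:ℂ) ≠ 0 := Complex.ofReal_ne_zero.2 hc.ne'
  have hb : (-(2*(c:ℂ))).re < 0 := by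
    rw [show (-(2*(c:ℂ))) = ((-(2*c) : ℝ) : ℂ) by push_cast; ring, Complex.ofReal_re]
    linarith
  intro k
  induction k with
  | zero =>
      have h0 := integral_cexp_quadratic hb L 0
      simp only [add_zero] at h0
      simp only [Her, one_mul, pow_zero, EE]
      have hexp : (0 : ℂ) - L^2/(4 * -(2*(c:ℂ))) = L^2/(8*(c:ℂ)) := by
        rw [zero_sub, show (4 * -(2*(c:ℂ))) = -(8*(c:ℂ)) by ring, div_neg, neg_neg]
      rw [h0, neg_neg, hexp]
  | succ k ih =>
      have hder : ∀ x : ℝ, HasDerivAt (fun y => Her c k y * EE c L y)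
          ((L * Her c k x - 4*(c:ℂ) * Her c (k+1) x) * EE c L x) x := by
        intro x
        have hid : HasDerivAt (fun y : ℝ => (y:ℂ)) 1 x := (hasDerivAt_id x).ofReal_comp
        have h2 : HasDerivAt (fun y : ℝ => (y:ℂ)^2) (2*(x:ℂ)) x := by
          have := hid.fun_mul hid
          simpa [pow_two, two_mul] using this
        have hg : HasDerivAt (fun y : ℝ => -(2*(c:ℂ)) * (y:ℂ)^2 + L*(y:ℂ))
            (-(2*(c:ℂ)) * (2*(x:ℂ)) + L) x := by
          simpa using (h2.const_mul (-(2*(c:ℂ)))).fun_add (hid.const_mul L)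
        have hE := hg.cexp
        have h := (her_hasDerivAt c k x).fun_mul hE
        have hshape : (fun y => Her c k y * EE c L y)
            = fun y => Her c k y * Complex.exp (-(2*(c:ℂ)) * (y:ℂ)^2 + L*(y:ℂ)) := by
          funext y; rw [EE]
        rw [hshape]
        convert h using 1
        · rfl
        rw [show Her c (k+1) x = (x:ℂ) * Her c k x - (k : ℂ) / (4*c) * Her c (k-1) x
            from her_rec c k x]
        rw [EE]
        field_simp
        ring
      have hint1 := her_integrable c hc k L
      have hint2 := her_integrable c hc (k+1) L
      have hintD : Integrable (fun x : ℝ =>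
          (L * Her c k x - 4*(c:ℂ) * Her c (k+1) x) * EE c L x) := by
        have : (fun x : ℝ => (L * Her c k x - 4*(c:ℂ) * Her c (k+1) x) * EE c L x)
            = fun x => L * (Her c k x * EE c L x) - (4*(c:ℂ)) * (Her c (k+1) x * EE c L x) := by
          funext x; ring
        rw [this]
        exact (hint1.const_mul L).sub (hint2.const_mul (4*(c:ℂ)))
      have hz := integral_eq_zero_of_hasDerivAt_of_integrable hder hintD hint1
      have hsplit : ∫ x : ℝ, (L * Her c k x - 4*(c:ℂ) * Her c (k+1) x) * EE c L x
          = L * (∫ x : ℝ, Her c k x * EE c L x)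
            - (4*(c:ℂ)) * ∫ x : ℝ, Her c (k+1) x * EE c L x := by
        rw [show (fun x : ℝ => (L * Her c k x - 4*(c:ℂ) * Her c (k+1) x) * EE c L x)
            = fun x => L * (Her c k x * EE c L x) - (4*(c:ℂ)) * (Her c (k+1) x * EE c L x)
            from funext fun x => by ring]
        rw [integral_sub (hint1.const_mul L) (hint2.const_mul (4*(c:ℂ))),
          integral_const_mul, integral_const_mul]
      rw [hsplit] at hz
      have h4c : (4*(c:ℂ)) ≠ 0 := by simp [hcC]
      have : ∫ x : ℝ, Her c (k+1) x * EE c L x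
          = (L/(4*(c:ℂ))) * ∫ x : ℝ, Her c k x * EE c L x := by
        field_simp
        linear_combination -hz
      rw [this, ih, pow_succ]
      ring

lemma binom_sum (A B μ ν : ℂ) (a b : ℕ) :
    ∑ i ∈ Finset.range (a+1), ∑ m ∈ Finset.range (b+1),
      (((a.choose i : ℂ) * (b.choose m : ℂ) * A^(i+m) * B^((a-i)+(b-m)) * (-1)^(b-m))
        * (μ^(i+(b-m)) * ν^((a-i)+m)))
      = (A*μ + B*ν)^a * (A*ν - B*μ)^b := by
  rw [add_pow, show A*ν - B*μ = A*ν + -(B*μ) by ring, add_pow, Finset.sum_mul_sum]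
  apply Finset.sum_congr rfl
  intro i _
  apply Finset.sum_congr rfl
  intro m _
  rw [neg_pow (B*μ)]
  ring

lemma lam_sinh_pos (lam x : ℝ) (hlam : lam ≠ 0) (hx : x ≠ 0) (hsame : 0 < lam * x) :
    0 < lam * Real.sinh x := by
  rcases hlam.lt_or_gt with h | h
  · have hx' : x < 0 := by nlinarith
    have hnp := Real.sinh_pos_iff.not.2 (by linarith : ¬ (0:ℝ) < x)
    have hs : Real.sinh x < 0 := by
      rcases lt_trichotomy (Real.sinh x) 0 with h' | h' | h'
      · exact h'
      · exact absurd (Real.sinh_eq_zero.1 h') hx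
      · exact absurd h' hnp
    nlinarith
  · have hx' : 0 < x := by nlinarith
    have hs : 0 < Real.sinh x := Real.sinh_pos_iff.2 hx'
    positivity

lemma c_pos (t lam : ℝ) (ht : 0 < t) (hlam : lam ≠ 0) : 0 < lam/4 * cothR (t*lam) := by
  have hx : t*lam ≠ 0 := mul_ne_zero ht.ne' hlam
  have h1 : 0 < lam * Real.sinh (t*lam) := by
    apply lam_sinh_pos lam (t*lam) hlam hx
    nlinarith [sq_nonneg lam, mul_pos ht (mul_self_pos.2 hlam)]
  have h2 : 0 < Real.cosh (t*lam) := Real.cosh_pos _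
  have h3 : Real.sinh (t*lam) ≠ 0 := Real.sinh_ne_zero.2 hx
  rw [cothR, div_mul_div_comm]
  rw [show lam * Real.cosh (t*lam) / (4 * Real.sinh (t*lam))
      = (lam * Real.sinh (t*lam)) * Real.cosh (t*lam) / (4 * (Real.sinh (t*lam))^2) by
    field_simp]
  positivity

lemma D_eq (t lam : ℝ) (ht : 0 < t) (hlam : lam ≠ 0) :
    4*(lam/4 * cothR (t*lam))^2 - (lam/2)^2 = lam^2/(4 * (Real.sinh (t*lam))^2) := by
  have h3 : Real.sinh (t*lam) ≠ 0 := Real.sinh_ne_zero.2 (mul_ne_zero ht.ne' hlam)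
  rw [cothR]
  field_simp
  linear_combination 4 * Real.cosh_sq_sub_sinh_sq (lam*t)

lemma D_pos (t lam : ℝ) (ht : 0 < t) (hlam : lam ≠ 0) :
    0 < 4*(lam/4 * cothR (t*lam))^2 - (lam/2)^2 := by
  rw [D_eq t lam ht hlam]
  have h3 : Real.sinh (t*lam) ≠ 0 := Real.sinh_ne_zero.2 (mul_ne_zero ht.ne' hlam)
  positivity

lemma exponent_id (t lam : ℝ) (ht : 0 < t) (hlam : lam ≠ 0) :
    -(lam/4 * cothR (t*lam))
      + (4*(lam/4 * cothR (t*lam))^2 - (lam/2)^2)/(8*(lam/4 * cothR (t*lam)))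
      = -(lam/4) * cothR (2*t*lam) := by
  have hx : t*lam ≠ 0 := mul_ne_zero ht.ne' hlam
  have h3 : Real.sinh (t*lam) ≠ 0 := Real.sinh_ne_zero.2 hx
  have h4 : Real.cosh (t*lam) ≠ 0 := (Real.cosh_pos _).ne'
  have h5 : lam ≠ 0 := hlam
  rw [show 2*t*lam = 2*(t*lam) by ring, cothR, cothR, Real.sinh_two_mul, Real.cosh_two_mul]
  field_simp
  ring_nf

lemma double_int (c : ℝ) (hc : 0 < c) (a b : ℕ) (coef : ℕ → ℕ → ℂ) (L M : ℂ) :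
    (∫ y : ℝ, ∫ v : ℝ, (∑ i ∈ Finset.range (a+1), ∑ m ∈ Finset.range (b+1),
        coef i m * (Her c (i+(b-m)) y * Her c ((a-i)+m) v)) * (EE c L y * EE c M v))
    = (∑ i ∈ Finset.range (a+1), ∑ m ∈ Finset.range (b+1),
        coef i m * ((L/(4*(c:ℂ)))^(i+(b-m)) * (M/(4*(c:ℂ)))^((a-i)+m)))
      * ((((Real.pi : ℂ))/(2*(c:ℂ)))^((1:ℂ)/2) * ((((Real.pi : ℂ))/(2*(c:ℂ)))^((1:ℂ)/2))
          * (Complex.exp (L^2/(8*(c:ℂ))) * Complex.exp (M^2/(8*(c:ℂ))))) := by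
  have hint : ∀ (k : ℕ) (N : ℂ), Integrable (fun v : ℝ => Her c k v * EE c N v) :=
    fun k N => her_integrable c hc k N
  have h1 : ∀ y : ℝ, (∫ v : ℝ, (∑ i ∈ Finset.range (a+1), ∑ m ∈ Finset.range (b+1),
        coef i m * (Her c (i+(b-m)) y * Her c ((a-i)+m) v)) * (EE c L y * EE c M v))
      = ∑ i ∈ Finset.range (a+1), ∑ m ∈ Finset.range (b+1),
          (coef i m * (Her c (i+(b-m)) y * EE c L y))
            * ((M/(4*(c:ℂ)))^((a-i)+m) * ((((Real.pi : ℂ))/(2*(c:ℂ)))^((1:ℂ)/2)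
                * Complex.exp (M^2/(8*(c:ℂ))))) := by
    intro y
    have hptw : (fun v : ℝ => (∑ i ∈ Finset.range (a+1), ∑ m ∈ Finset.range (b+1),
        coef i m * (Her c (i+(b-m)) y * Her c ((a-i)+m) v)) * (EE c L y * EE c M v))
        = fun v : ℝ => ∑ i ∈ Finset.range (a+1), ∑ m ∈ Finset.range (b+1),
          (coef i m * (Her c (i+(b-m)) y * EE c L y)) * (Her c ((a-i)+m) v * EE c M v) := by
      funext v
      simp only [Finset.sum_mul]
      apply Finset.sum_congr rfl
      intro i _
      apply Finset.sum_congr rfl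
      intro m _
      ring
    rw [hptw]
    rw [integral_finset_sum _ (fun i _ => integrable_finset_sum _
      (fun m _ => ((hint _ M).const_mul _)))]
    apply Finset.sum_congr rfl
    intro i _
    rw [integral_finset_sum _ (fun m _ => ((hint _ M).const_mul _))]
    apply Finset.sum_congr rfl
    intro m _
    rw [integral_const_mul, key c hc M ((a-i)+m)]
  simp only [h1]
  rw [integral_finset_sum _ (fun i _ => integrable_finset_sum _
    (fun m _ => (((hint _ L).const_mul _).mul_const _)))]
  rw [Finset.sum_mul]
  apply Finset.sum_congr rfl
  intro i _
  rw [integral_finset_sum _ (fun m _ => (((hint _ L).const_mul _).mul_const _))]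
  rw [Finset.sum_mul]
  apply Finset.sum_congr rfl
  intro m _
  rw [integral_mul_const, integral_const_mul, key c hc L (i+(b-m))]
  ring

lemma exp_split (n : ℕ) (c lam : ℝ) (z w : Fin n → ℂ) (x u : Fin n → ℝ) :
    (∑ j, (-(c:ℂ)) * (((x j):ℂ)^2 + ((u j):ℂ)^2))
      + (-(c:ℂ)) * (dotC (z - embC x) (z - embC x) + dotC (w - embC u) (w - embC u))
      + (-(Complex.I * (lam:ℂ) / 2)) * (dotC (embC x) w - dotC (embC u) z)
      = (-(c:ℂ)) * (dotC z z + dotC w w)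
        + ∑ j, ((-(2*(c:ℂ)) * ((x j):ℂ)^2 + (2*(c:ℂ)*z j - Complex.I*((lam/2 : ℝ):ℂ)*w j) * ((x j):ℂ))
              + (-(2*(c:ℂ)) * ((u j):ℂ)^2 + (2*(c:ℂ)*w j + Complex.I*((lam/2 : ℝ):ℂ)*z j) * ((u j):ℂ))) := by
  simp only [dotC, embC, Pi.sub_apply, Finset.mul_sum, ← Finset.sum_add_distrib,
    ← Finset.sum_sub_distrib, neg_mul]
  apply Finset.sum_congr rfl
  intro j _
  push_cast
  ring

set_option maxHeartbeats 2000000 in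
/-- For every pair of multi-indices `α, β ∈ ℕ₀^n` there exists `f ∈ L²(ℝ^{2n})`
with `H_t^λ f(z,w) = z^α w^β exp(-(λ/4)·coth(2tλ)·(z·z + w·w))` for all `(z,w) ∈ ℂ^{2n}`. -/
theorem monomial_Gaussian_in_image
    (n : ℕ) (hn : 1 ≤ n) (t lam : ℝ) (ht : 0 < t) (hlam : lam ≠ 0)
    (α β : Fin n → ℕ) :
    ∃ f : (Fin n → ℝ) × (Fin n → ℝ) → ℂ, MemLp f 2 volume ∧
      ∀ z w : Fin n → ℂ,
        HT n t lam f z w =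
          (∏ j, z j ^ α j) * (∏ j, w j ^ β j) *
            Complex.exp (((-(lam / 4) * cothR (2 * t * lam) : ℝ) : ℂ) *
              (dotC z z + dotC w w)) := by
  have hc : 0 < lam/4 * cothR (t*lam) := c_pos t lam ht hlam
  set c : ℝ := lam/4 * cothR (t*lam) with hcdef
  have hcC : (c:ℂ) ≠ 0 := Complex.ofReal_ne_zero.mpr hc.ne'
  have hsinh : Real.sinh (t*lam) ≠ 0 := Real.sinh_ne_zero.2 (mul_ne_zero ht.ne' hlam)
  have hDr : 0 < 4*c^2 - (lam/2)^2 := D_pos t lam ht hlam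
  set Dr : ℝ := 4*c^2 - (lam/2)^2 with hDrdef
  have hDrC : (Dr:ℂ) ≠ 0 := Complex.ofReal_ne_zero.mpr hDr.ne'
  have hDrc : (Dr:ℂ) = 4*(c:ℂ)^2 - ((lam/2 : ℝ):ℂ)^2 := by rw [hDrdef]; push_cast; ring
  set AA : ℂ := 8*(c:ℂ)^2/(Dr:ℂ) with hAAdef
  set BB : ℂ := 4*Complex.I*(c:ℂ)*((lam/2 : ℝ):ℂ)/(Dr:ℂ) with hBBdef
  set co : Fin n → ℕ → ℕ → ℂ := fun j i m =>
    ((α j).choose i : ℂ) * ((β j).choose m : ℂ) * AA^(i+m) * BB^((α j - i)+(β j - m))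
      * (-1)^(β j - m) with hco
  set Qf : Fin n → ℝ → ℝ → ℂ := fun j x u =>
    ∑ i ∈ Finset.range (α j + 1), ∑ m ∈ Finset.range (β j + 1),
      co j i m * (Her c (i + (β j - m)) x * Her c ((α j - i) + m) u) with hQf
  have hQcont : ∀ j, Continuous (fun q : ℝ × ℝ => Qf j q.1 q.2) := by
    intro j
    simp only [hQf]
    apply continuous_finset_sum
    intro i _
    apply continuous_finset_sum
    intro m _
    exact continuous_const.mul (((her_continuous c _).comp continuous_fst).mul
      ((her_continuous c _).comp continuous_snd))
  have hQb : ∀ j : Fin n, ∃ C : ℝ, 0 ≤ C ∧ ∀ x u : ℝ,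
      ‖Qf j x u‖ ≤ C * ((1+|x|)^(α j + β j) * (1+|u|)^(α j + β j)) := by
    intro j
    choose Cb hCb0 hCb using her_bound c
    refine ⟨∑ i ∈ Finset.range (α j + 1), ∑ m ∈ Finset.range (β j + 1),
      ‖co j i m‖ * Cb (i+(β j - m)) * Cb ((α j - i)+m), ?_, ?_⟩
    · apply Finset.sum_nonneg; intro i _
      apply Finset.sum_nonneg; intro m _
      have h1 := hCb0 (i+(β j - m)); have h2 := hCb0 ((α j - i)+m)
      positivity
    · intro x u
      have hx1 : (1:ℝ) ≤ 1+|x| := by simp [abs_nonneg]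
      have hu1 : (1:ℝ) ≤ 1+|u| := by simp [abs_nonneg]
      simp only [hQf]
      refine (norm_sum_le _ _).trans ?_
      refine (Finset.sum_le_sum (fun i _ => norm_sum_le _ _)).trans ?_
      rw [show (∑ i ∈ Finset.range (α j + 1), ∑ m ∈ Finset.range (β j + 1),
          ‖co j i m‖ * Cb (i+(β j - m)) * Cb ((α j - i)+m))
            * ((1+|x|)^(α j + β j) * (1+|u|)^(α j + β j))
          = ∑ i ∈ Finset.range (α j + 1), ∑ m ∈ Finset.range (β j + 1),
            (‖co j i m‖ * Cb (i+(β j - m)) * Cb ((α j - i)+m))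
              * ((1+|x|)^(α j + β j) * (1+|u|)^(α j + β j)) by
        rw [Finset.sum_mul]; exact Finset.sum_congr rfl fun i _ => by rw [Finset.sum_mul]]
      apply Finset.sum_le_sum
      intro i hi
      apply Finset.sum_le_sum
      intro m hm
      have him : i ≤ α j := Finset.mem_range_succ_iff.1 hi
      have hmm : m ≤ β j := Finset.mem_range_succ_iff.1 hm
      have e1 : (1+|x|)^(i+(β j - m)) ≤ (1+|x|)^(α j + β j) :=
        pow_le_pow_right₀ hx1 (by omega)
      have e2 : (1+|u|)^((α j - i)+m) ≤ (1+|u|)^(α j + β j) :=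
        pow_le_pow_right₀ hu1 (by omega)
      have hn1 : ‖Her c (i+(β j - m)) x‖ ≤ Cb (i+(β j - m)) * (1+|x|)^(α j + β j) :=
        (hCb _ x).trans (mul_le_mul_of_nonneg_left e1 (hCb0 _))
      have hn2 : ‖Her c ((α j - i)+m) u‖ ≤ Cb ((α j - i)+m) * (1+|u|)^(α j + β j) :=
        (hCb _ u).trans (mul_le_mul_of_nonneg_left e2 (hCb0 _))
      calc ‖co j i m * (Her c (i+(β j - m)) x * Her c ((α j - i)+m) u)‖
          = ‖co j i m‖ * (‖Her c (i+(β j - m)) x‖ * ‖Her c ((α j - i)+m) u‖) := by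
            simp only [norm_mul]
        _ ≤ ‖co j i m‖ * ((Cb (i+(β j - m)) * (1+|x|)^(α j + β j))
              * (Cb ((α j - i)+m) * (1+|u|)^(α j + β j))) := by
            apply mul_le_mul_of_nonneg_left ?_ (norm_nonneg _)
            exact mul_le_mul hn1 hn2 (norm_nonneg _) (mul_nonneg (hCb0 _) (by positivity))
        _ = (‖co j i m‖ * Cb (i+(β j - m)) * Cb ((α j - i)+m))
              * ((1+|x|)^(α j + β j) * (1+|u|)^(α j + β j)) := by ring
  set An : ℂ := ((((4*Real.pi)^n)⁻¹ : ℝ) : ℂ) * (((lam/Real.sinh (t*lam))^n : ℝ) : ℂ) with hAndef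
  have hAnne : An ≠ 0 := by
    rw [hAndef]
    apply mul_ne_zero
    · rw [Complex.ofReal_ne_zero]
      have : (0:ℝ) < 4*Real.pi := by positivity
      positivity
    · rw [Complex.ofReal_ne_zero]
      exact pow_ne_zero _ (div_ne_zero hlam hsinh)
  have hpC : ∀ Z W : Fin n → ℂ, pC n t lam Z W
      = An * Complex.exp ((-(c:ℂ)) * (dotC Z Z + dotC W W)) := by
    intro Z W
    have hcoef : ((-(lam / 4) * cothR (t * lam) : ℝ) : ℂ) = -(c:ℂ) := by
      rw [hcdef]; push_cast; ring
    rw [pC, hcoef, hAndef]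
  set Sc : ℂ := (((Real.pi : ℂ))/(2*(c:ℂ)))^((1:ℂ)/2) with hScdef
  have hpiC : (((Real.pi : ℂ))/(2*(c:ℂ))) ≠ 0 := by
    apply div_ne_zero
    · exact Complex.ofReal_ne_zero.2 Real.pi_ne_zero
    · simpa using hcC
  have hSS : Sc * Sc = ((Real.pi : ℂ))/(2*(c:ℂ)) := by
    rw [hScdef, ← Complex.cpow_add _ _ hpiC]
    norm_num
  set K : ℂ := (An * (((Real.pi : ℂ))/(2*(c:ℂ)))^n)⁻¹ with hKdef
  set f : (Fin n → ℝ) × (Fin n → ℝ) → ℂ := fun p =>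
    K * ∏ j, (Qf j (p.1 j) (p.2 j)
      * Complex.exp ((-(c:ℂ)) * (((p.1 j :ℝ):ℂ)^2 + ((p.2 j :ℝ):ℂ)^2))) with hfdef
  clear_value f K Sc An Qf co BB AA Dr c
  refine ⟨f, ?_, ?_⟩
  · -- Memℒp
    have hfcont : Continuous f := by
      rw [hfdef]
      apply continuous_const.mul
      apply continuous_finset_prod
      intro j _
      apply Continuous.mul
      · exact (hQcont j).comp (Continuous.prodMk
          ((continuous_apply j).comp continuous_fst) ((continuous_apply j).comp continuous_snd))
      · apply Complex.continuous_exp.comp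
        fun_prop
    rw [memLp_two_iff_integrable_sq_norm hfcont.aestronglyMeasurable]
    choose CC hCC0 hCCb using hQb
    have hdom : Integrable (fun p : (Fin n → ℝ) × (Fin n → ℝ) =>
        (∏ j, ((CC j)^2 * ((1+|p.1 j|)^((α j + β j)*2) * Real.exp (-(2*c*(p.1 j)^2)))))
        * (∏ j, ((1+|p.2 j|)^((α j + β j)*2) * Real.exp (-(2*c*(p.2 j)^2))))) volume := by
      rw [Measure.volume_eq_prod]
      have hF : Integrable (fun xv : Fin n → ℝ =>
          ∏ j, ((CC j)^2 * ((1+|xv j|)^((α j + β j)*2) * Real.exp (-(2*c*(xv j)^2))))) :=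
        Integrable.fintype_prod fun j =>
          ((integrable_aux0 (2*c) (by positivity) _).const_mul ((CC j)^2))
      have hG : Integrable (fun uv : Fin n → ℝ =>
          ∏ j, ((1+|uv j|)^((α j + β j)*2) * Real.exp (-(2*c*(uv j)^2)))) :=
        Integrable.fintype_prod fun j => integrable_aux0 (2*c) (by positivity) _
      exact hF.mul_prod hG
    apply Integrable.mono' (hdom.const_mul (‖K‖^2))
    · exact ((hfcont.norm).pow 2).aestronglyMeasurable
    · filter_upwards with p
      rw [Real.norm_eq_abs, _root_.abs_of_nonneg (by positivity)]
      have h1 : ‖f p‖ = ‖K‖ * ∏ j, ‖Qf j (p.1 j) (p.2 j)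
          * Complex.exp ((-(c:ℂ)) * (((p.1 j :ℝ):ℂ)^2 + ((p.2 j :ℝ):ℂ)^2))‖ := by
        simp only [hfdef]
        rw [norm_mul, norm_prod]
      rw [h1, mul_pow, ← Finset.prod_pow]
      apply mul_le_mul_of_nonneg_left ?_ (by positivity)
      rw [← Finset.prod_mul_distrib]
      apply Finset.prod_le_prod (fun j _ => by positivity)
      intro j _
      have hexpn : ‖Complex.exp ((-(c:ℂ)) * (((p.1 j :ℝ):ℂ)^2 + ((p.2 j :ℝ):ℂ)^2))‖
          = Real.exp (-(c*(p.1 j)^2)) * Real.exp (-(c*(p.2 j)^2)) := by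
        rw [← Real.exp_add, Complex.norm_exp]
        congr 1
        simp [Complex.mul_re, ← Complex.ofReal_pow]
        ring
      have hbase : ‖Qf j (p.1 j) (p.2 j) * Complex.exp ((-(c:ℂ)) * (((p.1 j :ℝ):ℂ)^2 + ((p.2 j :ℝ):ℂ)^2))‖
          ≤ (CC j * ((1+|p.1 j|)^(α j+β j) * (1+|p.2 j|)^(α j+β j)))
            * (Real.exp (-(c*(p.1 j)^2)) * Real.exp (-(c*(p.2 j)^2))) := by
        rw [norm_mul, hexpn]
        exact mul_le_mul_of_nonneg_right (hCCb j _ _) (by positivity)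
      have ex2 : ∀ a : ℝ, (Real.exp a)^2 = Real.exp (a + a) := fun a => by
        rw [Real.exp_add]; ring
      have px2 : ∀ (y : ℝ) (N : ℕ), ((1+|y|)^N)^2 = (1+|y|)^(N*2) := fun y N => by
        rw [pow_mul]
      calc ‖Qf j (p.1 j) (p.2 j) * Complex.exp ((-(c:ℂ)) * (((p.1 j :ℝ):ℂ)^2 + ((p.2 j :ℝ):ℂ)^2))‖^2
          ≤ ((CC j * ((1+|p.1 j|)^(α j+β j) * (1+|p.2 j|)^(α j+β j)))
            * (Real.exp (-(c*(p.1 j)^2)) * Real.exp (-(c*(p.2 j)^2))))^2 :=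
            pow_le_pow_left₀ (norm_nonneg _) hbase 2
        _ = ((CC j)^2 * ((1+|p.1 j|)^((α j + β j)*2) * Real.exp (-(2*c*(p.1 j)^2))))
            * ((1+|p.2 j|)^((α j + β j)*2) * Real.exp (-(2*c*(p.2 j)^2))) := by
            simp only [mul_pow]
            rw [px2, px2, ex2, ex2,
              show -(c*(p.1 j)^2) + -(c*(p.1 j)^2) = -(2*c*(p.1 j)^2) from by ring,
              show -(c*(p.2 j)^2) + -(c*(p.2 j)^2) = -(2*c*(p.2 j)^2) from by ring]
            ring
  · intro z w
    set L : Fin n → ℂ := fun j => 2*(c:ℂ)*z j - Complex.I*((lam/2 : ℝ):ℂ)*w j with hLdef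
    set M : Fin n → ℂ := fun j => 2*(c:ℂ)*w j + Complex.I*((lam/2 : ℝ):ℂ)*z j with hMdef
    set Ψ : Fin n → ℝ → ℝ → ℂ := fun j x u => Qf j x u * (EE c (L j) x * EE c (M j) u) with hPsidef
    clear_value L M Ψ
    have hΨcont : Continuous (fun p : (Fin n → ℝ) × (Fin n → ℝ) => ∏ j, Ψ j (p.1 j) (p.2 j)) := by
      apply continuous_finset_prod
      intro j _
      simp only [hPsidef]
      apply Continuous.mul
      · exact (hQcont j).comp (Continuous.prodMk
          ((continuous_apply j).comp continuous_fst) ((continuous_apply j).comp continuous_snd))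
      · exact ((EE_cont c (L j)).comp ((continuous_apply j).comp continuous_fst)).mul
          ((EE_cont c (M j)).comp ((continuous_apply j).comp continuous_snd))
    choose CC hCC0 hCCb using hQb
    have hΨbnd : ∀ (j : Fin n) (x u : ℝ), ‖Ψ j x u‖ ≤
        (CC j * ((1+|x|)^(α j + β j) * Real.exp (-(2*c*x^2) + (L j).re * x)))
        * ((1+|u|)^(α j + β j) * Real.exp (-(2*c*u^2) + (M j).re * u)) := by
      intro j x u
      simp only [hPsidef]
      rw [norm_mul, norm_mul, EE_norm, EE_norm]
      calc ‖Qf j x u‖ * (Real.exp (-(2*c*x^2) + (L j).re*x) * Real.exp (-(2*c*u^2) + (M j).re*u))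
          ≤ (CC j * ((1+|x|)^(α j+β j) * (1+|u|)^(α j+β j)))
            * (Real.exp (-(2*c*x^2) + (L j).re*x) * Real.exp (-(2*c*u^2) + (M j).re*u)) :=
            mul_le_mul_of_nonneg_right (hCCb j x u) (by positivity)
        _ = (CC j * ((1+|x|)^(α j + β j) * Real.exp (-(2*c*x^2) + (L j).re * x)))
            * ((1+|u|)^(α j + β j) * Real.exp (-(2*c*u^2) + (M j).re * u)) := by ring
    have hΨint : Integrable (fun p : (Fin n → ℝ) × (Fin n → ℝ) => ∏ j, Ψ j (p.1 j) (p.2 j))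
        ((volume : Measure (Fin n → ℝ)).prod (volume : Measure (Fin n → ℝ))) := by
      have hdom : Integrable (fun p : (Fin n → ℝ) × (Fin n → ℝ) =>
          (∏ j, (CC j * ((1+|p.1 j|)^(α j + β j) * Real.exp (-(2*c*(p.1 j)^2) + (L j).re * p.1 j))))
          * (∏ j, ((1+|p.2 j|)^(α j + β j) * Real.exp (-(2*c*(p.2 j)^2) + (M j).re * p.2 j))))
          ((volume : Measure (Fin n → ℝ)).prod (volume : Measure (Fin n → ℝ))) := by
        have hF : Integrable (fun xv : Fin n → ℝ =>
            ∏ j, (CC j * ((1+|xv j|)^(α j + β j) * Real.exp (-(2*c*(xv j)^2) + (L j).re * xv j)))) :=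
          Integrable.fintype_prod fun j =>
            ((integrable_aux (2*c) ((L j).re) (by positivity) _).const_mul (CC j))
        have hG : Integrable (fun uv : Fin n → ℝ =>
            ∏ j, ((1+|uv j|)^(α j + β j) * Real.exp (-(2*c*(uv j)^2) + (M j).re * uv j))) :=
          Integrable.fintype_prod fun j => integrable_aux (2*c) ((M j).re) (by positivity) _
        exact hF.mul_prod hG
      apply Integrable.mono' hdom
      · rw [← Measure.volume_eq_prod]
        exact hΨcont.aestronglyMeasurable
      · filter_upwards with p
        rw [norm_prod]
        calc ∏ j, ‖Ψ j (p.1 j) (p.2 j)‖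
            ≤ ∏ j, ((CC j * ((1+|p.1 j|)^(α j + β j) * Real.exp (-(2*c*(p.1 j)^2) + (L j).re * p.1 j)))
              * ((1+|p.2 j|)^(α j + β j) * Real.exp (-(2*c*(p.2 j)^2) + (M j).re * p.2 j))) :=
              Finset.prod_le_prod (fun j _ => norm_nonneg _) (fun j _ => hΨbnd j (p.1 j) (p.2 j))
          _ = _ := Finset.prod_mul_distrib
    have hprod : ∀ p : (Fin n → ℝ) × (Fin n → ℝ),
        f p * pC n t lam (z - embC p.1) (w - embC p.2)
          * Complex.exp (-(Complex.I * lam / 2) * (dotC (embC p.1) w - dotC (embC p.2) z))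
        = (K * An * Complex.exp ((-(c:ℂ)) * (dotC z z + dotC w w))) * ∏ j, Ψ j (p.1 j) (p.2 j) := by
      intro p
      have e1 : ∏ j, (Qf j (p.1 j) (p.2 j)
            * Complex.exp ((-(c:ℂ)) * (((p.1 j :ℝ):ℂ)^2 + ((p.2 j :ℝ):ℂ)^2)))
          = (∏ j, Qf j (p.1 j) (p.2 j))
            * Complex.exp (∑ j, (-(c:ℂ)) * (((p.1 j :ℝ):ℂ)^2 + ((p.2 j :ℝ):ℂ)^2)) := by
        rw [Finset.prod_mul_distrib, ← Complex.exp_sum]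
      have e2 : ∏ j, Ψ j (p.1 j) (p.2 j)
          = (∏ j, Qf j (p.1 j) (p.2 j)) * Complex.exp (∑ j,
              ((-(2*(c:ℂ)) * ((p.1 j :ℝ):ℂ)^2
                  + (2*(c:ℂ)*z j - Complex.I*((lam/2 : ℝ):ℂ)*w j) * ((p.1 j :ℝ):ℂ))
              + (-(2*(c:ℂ)) * ((p.2 j :ℝ):ℂ)^2
                  + (2*(c:ℂ)*w j + Complex.I*((lam/2 : ℝ):ℂ)*z j) * ((p.2 j :ℝ):ℂ)))) := by
        simp only [hPsidef, hLdef, hMdef, EE, ← Complex.exp_add]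
        rw [Finset.prod_mul_distrib, ← Complex.exp_sum]
      simp only [hfdef]
      rw [hpC, e1, e2]
      have hE : Complex.exp (∑ j, (-(c:ℂ)) * (((p.1 j :ℝ):ℂ)^2 + ((p.2 j :ℝ):ℂ)^2))
            * Complex.exp ((-(c:ℂ)) * (dotC (z - embC p.1) (z - embC p.1)
                + dotC (w - embC p.2) (w - embC p.2)))
            * Complex.exp ((-(Complex.I * (lam:ℂ) / 2))
                * (dotC (embC p.1) w - dotC (embC p.2) z))
          = Complex.exp ((-(c:ℂ)) * (dotC z z + dotC w w)) * Complex.exp (∑ j,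
              ((-(2*(c:ℂ)) * ((p.1 j :ℝ):ℂ)^2
                  + (2*(c:ℂ)*z j - Complex.I*((lam/2 : ℝ):ℂ)*w j) * ((p.1 j :ℝ):ℂ))
              + (-(2*(c:ℂ)) * ((p.2 j :ℝ):ℂ)^2
                  + (2*(c:ℂ)*w j + Complex.I*((lam/2 : ℝ):ℂ)*z j) * ((p.2 j :ℝ):ℂ)))) := by
        rw [← Complex.exp_add, ← Complex.exp_add, exp_split n c lam z w p.1 p.2, Complex.exp_add]
      linear_combination (K * An * (∏ j, Qf j (p.1 j) (p.2 j))) * hE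
    have hfub : (∫ p : (Fin n → ℝ) × (Fin n → ℝ), ∏ j, Ψ j (p.1 j) (p.2 j))
        = ∏ j, ∫ y : ℝ, ∫ v : ℝ, Ψ j y v := by
      rw [Measure.volume_eq_prod, integral_prod _ hΨint]
      have h1 : ∀ xv : Fin n → ℝ, (∫ uv : Fin n → ℝ, ∏ j, Ψ j (xv j) (uv j))
          = ∏ j, ∫ v : ℝ, Ψ j (xv j) v := fun xv =>
        integral_fintype_prod_volume_eq_prod (fun j v => Ψ j (xv j) v)
      simp_rw [h1]
      exact integral_fintype_prod_volume_eq_prod (fun j y => ∫ v : ℝ, Ψ j y v)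
    have hAZ : ∀ j, AA * ((L j)/(4*(c:ℂ))) + BB * ((M j)/(4*(c:ℂ))) = z j := by
      intro j
      have key1 : 2*(c:ℂ)*(L j) + Complex.I*((lam/2 : ℝ):ℂ)*(M j) = (Dr:ℂ) * z j := by
        simp only [hLdef, hMdef]
        rw [hDrc]
        linear_combination (((lam/2 : ℝ):ℂ)^2 * z j) * Complex.I_sq
      have e : AA * ((L j)/(4*(c:ℂ))) + BB * ((M j)/(4*(c:ℂ)))
          = (2*(c:ℂ)*(L j) + Complex.I*((lam/2 : ℝ):ℂ)*(M j))/(Dr:ℂ) := by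
        rw [hAAdef, hBBdef]
        field_simp
        ring
      rw [e, key1]
      exact mul_div_cancel_left₀ _ hDrC
    have hAW : ∀ j, AA * ((M j)/(4*(c:ℂ))) - BB * ((L j)/(4*(c:ℂ))) = w j := by
      intro j
      have key2 : 2*(c:ℂ)*(M j) - Complex.I*((lam/2 : ℝ):ℂ)*(L j) = (Dr:ℂ) * w j := by
        simp only [hLdef, hMdef]
        rw [hDrc]
        linear_combination (((lam/2 : ℝ):ℂ)^2 * w j) * Complex.I_sq
      have e : AA * ((M j)/(4*(c:ℂ))) - BB * ((L j)/(4*(c:ℂ)))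
          = (2*(c:ℂ)*(M j) - Complex.I*((lam/2 : ℝ):ℂ)*(L j))/(Dr:ℂ) := by
        rw [hAAdef, hBBdef]
        field_simp
        ring
      rw [e, key2]
      exact mul_div_cancel_left₀ _ hDrC
    have hIy : ∀ j, (∫ y : ℝ, ∫ v : ℝ, Ψ j y v)
        = (z j)^(α j) * (w j)^(β j)
          * ((Sc * Sc) * Complex.exp (((L j)^2 + (M j)^2)/(8*(c:ℂ)))) := by
      intro j
      have hdi := double_int c hc (α j) (β j) (co j) (L j) (M j)
      simp only [hPsidef, hQf]
      rw [hdi, ← hScdef]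
      simp only [hco]
      rw [binom_sum AA BB ((L j)/(4*(c:ℂ))) ((M j)/(4*(c:ℂ))) (α j) (β j)]
      rw [hAZ j, hAW j, ← Complex.exp_add, ← add_div]
    have hLM : ∀ j, (L j)^2 + (M j)^2 = (Dr:ℂ) * ((z j)^2 + (w j)^2) := by
      intro j
      simp only [hLdef, hMdef]
      rw [hDrc]
      linear_combination (((lam/2 : ℝ):ℂ)^2 * ((z j)^2 + (w j)^2)) * Complex.I_sq
    have hdot : dotC z z + dotC w w = ∑ j, ((z j)^2 + (w j)^2) := by
      simp [dotC, ← Finset.sum_add_distrib, sq]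
    have hsum : ∑ j, ((L j)^2 + (M j)^2)/(8*(c:ℂ))
        = ((Dr:ℂ)/(8*(c:ℂ))) * (dotC z z + dotC w w) := by
      rw [hdot, Finset.mul_sum]
      apply Finset.sum_congr rfl
      intro j _
      rw [hLM j]
      ring
    have hcoef2 : (-(c:ℂ)) + (Dr:ℂ)/(8*(c:ℂ)) = ((-(lam / 4) * cothR (2 * t * lam) : ℝ) : ℂ) := by
      have hr := exponent_id t lam ht hlam
      rw [← hcdef, ← hDrdef] at hr
      calc (-(c:ℂ)) + (Dr:ℂ)/(8*(c:ℂ)) = ((-c + Dr/(8*c) : ℝ) : ℂ) := by push_cast; ring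
        _ = _ := by rw [hr]
    have hKAn : K * An * (Sc * Sc)^n = 1 := by
      rw [hSS, hKdef, mul_assoc]
      exact inv_mul_cancel₀ (mul_ne_zero hAnne (pow_ne_zero _ hpiC))
    calc HT n t lam f z w
        = ∫ p : (Fin n → ℝ) × (Fin n → ℝ),
            (K * An * Complex.exp ((-(c:ℂ)) * (dotC z z + dotC w w)))
              * ∏ j, Ψ j (p.1 j) (p.2 j) := by
          simp only [HT]
          exact integral_congr_ae (Filter.EventuallyEq.of_eq (funext hprod))
      _ = (K * An * Complex.exp ((-(c:ℂ)) * (dotC z z + dotC w w)))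
            * ∫ p : (Fin n → ℝ) × (Fin n → ℝ), ∏ j, Ψ j (p.1 j) (p.2 j) :=
          integral_const_mul _ _
      _ = (K * An * Complex.exp ((-(c:ℂ)) * (dotC z z + dotC w w)))
            * ∏ j, ((z j)^(α j) * (w j)^(β j)
              * ((Sc * Sc) * Complex.exp (((L j)^2 + (M j)^2)/(8*(c:ℂ))))) := by
          rw [hfub, Finset.prod_congr rfl (fun j _ => hIy j)]
      _ = (K * An * (Sc * Sc)^n) * ((∏ j, (z j)^(α j)) * (∏ j, (w j)^(β j)))
            * (Complex.exp ((-(c:ℂ)) * (dotC z z + dotC w w))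
              * Complex.exp (∑ j, ((L j)^2 + (M j)^2)/(8*(c:ℂ)))) := by
          rw [Finset.prod_mul_distrib, Finset.prod_mul_distrib, Finset.prod_mul_distrib,
            ← Complex.exp_sum, Finset.prod_const, Finset.card_univ, Fintype.card_fin]
          ring
      _ = (∏ j, (z j)^(α j)) * (∏ j, (w j)^(β j))
            * Complex.exp (((-(lam / 4) * cothR (2 * t * lam) : ℝ) : ℂ)
              * (dotC z z + dotC w w)) := by
          rw [hKAn, hsum, ← Complex.exp_add,
            show (-(c:ℂ)) * (dotC z z + dotC w w)
                + ((Dr:ℂ)/(8*(c:ℂ))) * (dotC z z + dotC w w)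
              = ((-(c:ℂ)) + (Dr:ℂ)/(8*(c:ℂ))) * (dotC z z + dotC w w) from by ring,
            hcoef2]
          ring
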